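/- Assume g : [a,b] → D and F : D → ℝ have derivatives almost everywhere and f = F' almost everywhere. Then F∘g has negligible variation on the set B where (F∘g)' = (f∘g)·g' fails if and only if F∘g has negligible variation on every null subset of [a,b] and on the set {x : g'(x) = 0}. -/

import Mathlib

open Set MeasureTheory Filter
open scoped Classical
open scoped Topology ENNReal NNReal

/-- A tagged partition of `[a, b]`: division points `t 0 = a ≤ t 1 ≤ ⋯ ≤ t n = b`
together with tags `tag i ∈ [t i, t (i+1)]`. -/
structure TaggedPartition (a b : ℝ) where
  n : ℕ
  t : ℕ → ℝ
  tag : ℕ → ℝ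
  t_first : t 0 = a
  t_last : t n = b
  t_mono : ∀ i < n, t i ≤ t (i + 1)
  tag_mem : ∀ i < n, tag i ∈ Set.Icc (t i) (t (i + 1))

/-- A tagged partition is subordinate to a gauge `δ` if each interval is contained in the
open ball of radius `δ` around its tag. -/
def TaggedPartition.Subordinate {a b : ℝ} (P : TaggedPartition a b) (δ : ℝ → ℝ) : Prop :=
  ∀ i < P.n,
    Set.Icc (P.t i) (P.t (i + 1)) ⊆ Set.Ioo (P.tag i - δ (P.tag i)) (P.tag i + δ (P.tag i))

/-- A gauge on `[a, b]` is positive on `[a, b]`. -/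
def IsGauge (a b : ℝ) (δ : ℝ → ℝ) : Prop := ∀ x ∈ Set.Icc a b, 0 < δ x

/-- `f` has negligible variation on `E ⊆ [a, b]`. -/

def NegVar (a b : ℝ) (f : ℝ → ℝ) (E : Set ℝ) : Prop :=
  ∀ ε > 0, ∃ δ : ℝ → ℝ, IsGauge a b δ ∧ ∀ P : TaggedPartition a b, P.Subordinate δ →
    (∑ i ∈ Finset.range P.n,
      if P.tag i ∈ E then |f (P.t (i + 1)) - f (P.t i)| else 0) < ε

/-- `f` has negligible conditional variation on `E ⊆ [a, b]`. -/

def NegCondVar (a b : ℝ) (f : ℝ → ℝ) (E : Set ℝ) : Prop :=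
  ∀ ε > 0, ∃ δ : ℝ → ℝ, IsGauge a b δ ∧ ∀ P : TaggedPartition a b, P.Subordinate δ →
    |∑ i ∈ Finset.range P.n,
      if P.tag i ∈ E then f (P.t (i + 1)) - f (P.t i) else 0| < ε

/-- `I` is the Henstock–Kurzweil integral of `h` on `[a, b]` (with `a ≤ b`). -/
def HKIntegralTo (a b : ℝ) (h : ℝ → ℝ) (I : ℝ) : Prop :=
  ∀ ε > 0, ∃ δ : ℝ → ℝ, IsGauge a b δ ∧ ∀ P : TaggedPartition a b, P.Subordinate δ →
    |(∑ i ∈ Finset.range P.n, h (P.tag i) * (P.t (i + 1) - P.t i)) - I| < ε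

/-- Oriented HK integral: `(HK)∫_a^b h = I`, with the convention
`(HK)∫_b^a h = -(HK)∫_a^b h`. -/
def HKIntegral (a b : ℝ) (h : ℝ → ℝ) (I : ℝ) : Prop :=
  if a ≤ b then HKIntegralTo a b h I else HKIntegralTo b a h (-I)

namespace TaggedPartition

variable {a b : ℝ} (P : TaggedPartition a b)

lemma t_le_t {i j : ℕ} (hij : i ≤ j) (hj : j ≤ P.n) : P.t i ≤ P.t j := by
  induction j with
  | zero => simp_all
  | succ k ih =>
    rcases Nat.lt_or_ge i (k+1) with h | h
    · exact le_trans (ih (Nat.lt_succ_iff.mp h) (le_trans (Nat.le_succ k) hj))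
        (P.t_mono k (Nat.lt_of_lt_of_le (Nat.lt_succ_self k) hj))
    · have : i = k + 1 := le_antisymm hij h
      simp [this]

lemma t_mem_Icc {i : ℕ} (hi : i ≤ P.n) : P.t i ∈ Set.Icc a b := by
  refine ⟨?_, ?_⟩
  · have := P.t_le_t (Nat.zero_le i) hi
    rwa [P.t_first] at this
  · have := P.t_le_t hi le_rfl
    rwa [P.t_last] at this

lemma tag_mem_Icc {i : ℕ} (hi : i < P.n) : P.tag i ∈ Set.Icc a b := by
  obtain ⟨h1, h2⟩ := P.tag_mem i hi
  exact ⟨le_trans (P.t_mem_Icc (le_of_lt hi)).1 h1,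
    le_trans h2 (P.t_mem_Icc hi).2⟩

lemma sum_lengths : ∑ i ∈ Finset.range P.n, (P.t (i+1) - P.t i) = b - a := by
  rw [Finset.sum_range_sub, P.t_first, P.t_last]

end TaggedPartition

lemma negvar_mono {a b : ℝ} {f : ℝ → ℝ} {E E' : Set ℝ} (h : E' ⊆ E)
    (hE : NegVar a b f E) : NegVar a b f E' := by
  intro ε hε
  obtain ⟨δ, hδ, hP⟩ := hE ε hε
  refine ⟨δ, hδ, fun P hsub => lt_of_le_of_lt ?_ (hP P hsub)⟩
  apply Finset.sum_le_sum
  intro i _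
  by_cases hi : P.tag i ∈ E'
  · simp [hi, h hi]
  · simp only [hi, if_false]
    positivity

lemma negvar_union {a b : ℝ} {f : ℝ → ℝ} {E₁ E₂ : Set ℝ}
    (h₁ : NegVar a b f E₁) (h₂ : NegVar a b f E₂) : NegVar a b f (E₁ ∪ E₂) := by
  intro ε hε
  obtain ⟨δ₁, hδ₁, hP₁⟩ := h₁ (ε/2) (by positivity)
  obtain ⟨δ₂, hδ₂, hP₂⟩ := h₂ (ε/2) (by positivity)
  refine ⟨fun x => min (δ₁ x) (δ₂ x), fun x hx => lt_min (hδ₁ x hx) (hδ₂ x hx), fun P hsub => ?_⟩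
  have sub1 : P.Subordinate δ₁ := fun i hi => (hsub i hi).trans
    (Set.Ioo_subset_Ioo (by simp [min_le_left]; linarith [min_le_left (δ₁ (P.tag i)) (δ₂ (P.tag i))])
      (by linarith [min_le_left (δ₁ (P.tag i)) (δ₂ (P.tag i))]))
  have sub2 : P.Subordinate δ₂ := fun i hi => (hsub i hi).trans
    (Set.Ioo_subset_Ioo (by linarith [min_le_right (δ₁ (P.tag i)) (δ₂ (P.tag i))])
      (by linarith [min_le_right (δ₁ (P.tag i)) (δ₂ (P.tag i))]))
  have := hP₁ P sub1
  have := hP₂ P sub2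
  refine lt_of_le_of_lt (?_ : _ ≤
      (∑ i ∈ Finset.range P.n, if P.tag i ∈ E₁ then |f (P.t (i + 1)) - f (P.t i)| else 0) +
      (∑ i ∈ Finset.range P.n, if P.tag i ∈ E₂ then |f (P.t (i + 1)) - f (P.t i)| else 0))
    (by linarith)
  rw [← Finset.sum_add_distrib]
  apply Finset.sum_le_sum
  intro i _
  by_cases h1 : P.tag i ∈ E₁ <;> by_cases h2 : P.tag i ∈ E₂ <;>
    simp [h1, h2, abs_nonneg]

lemma slope_bound {h : ℝ → ℝ} {x L : ℝ} (hd : HasDerivAt h L x) {c : ℝ} (hc : |L| < c) :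
    ∃ d > 0, ∀ y, dist y x < d → |h y - h x| ≤ c * |y - x| := by
  have ht := hasDerivAt_iff_tendsto_slope.mp hd
  have h2 : ∀ᶠ y in 𝓝[≠] x, |slope h x y| < c := by
    have := ht (Metric.ball_mem_nhds L (by linarith [abs_nonneg L] : (0:ℝ) < c - |L|))
    filter_upwards [this] with y hy
    have : |slope h x y - L| < c - |L| := by simpa [Real.dist_eq] using hy
    calc |slope h x y| ≤ |slope h x y - L| + |L| := by
          simpa using abs_add_le (slope h x y - L) L
      _ < c := by linarith
  obtain ⟨d, hd0, hdy⟩ := Metric.mem_nhdsWithin_iff.mp h2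
  refine ⟨d, hd0, fun y hy => ?_⟩
  rcases eq_or_ne y x with rfl | hne
  · simp
  · have : |slope h x y| < c := hdy ⟨by rwa [Metric.mem_ball], hne⟩
    rw [slope_def_field] at this
    have hyx : y - x ≠ 0 := sub_ne_zero.mpr hne
    have h3 : |h y - h x| / |y - x| < c := by
      rw [← abs_div]; exact this
    calc |h y - h x| = |h y - h x| / |y - x| * |y - x| := by
          field_simp
      _ ≤ c * |y - x| :=
          mul_le_mul_of_nonneg_right (le_of_lt h3) (abs_nonneg _)

lemma negvar_of_hasDerivAt_zero {a b : ℝ} (hab : a ≤ b) {h : ℝ → ℝ} {S : Set ℝ}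
    (hd : ∀ x ∈ S, HasDerivAt h 0 x) : NegVar a b h S := by
  intro ε hε
  set c := ε / (2*(b-a)+2) with hc_def
  have hba : (0:ℝ) ≤ b - a := by linarith
  have hc : 0 < c := by
    apply div_pos hε; linarith
  have key : ∀ x ∈ S, ∃ d > 0, ∀ y, dist y x < d → |h y - h x| ≤ c * |y - x| :=
    fun x hx => slope_bound (hd x hx) (by simpa using hc)
  choose! d hd0 hbound using key
  refine ⟨fun x => if hx : x ∈ S then d x else 1, fun x _ => ?_, fun P hsub => ?_⟩
  · by_cases hx : x ∈ S <;> simp [hx]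
    exact hd0 x hx
  · have step : ∀ i ∈ Finset.range P.n,
        (if P.tag i ∈ S then |h (P.t (i+1)) - h (P.t i)| else 0) ≤ c * (P.t (i+1) - P.t i) := by
      intro i hi
      rw [Finset.mem_range] at hi
      have hlen : P.t i ≤ P.t (i+1) := P.t_mono i hi
      by_cases htag : P.tag i ∈ S
      · simp only [htag, if_true]
        set τ := P.tag i with hτ
        have hδ : (if hx : τ ∈ S then d τ else 1) = d τ := dif_pos htag
        have h1 : P.t i ∈ Set.Ioo (τ - d τ) (τ + d τ) := by
          have := hsub i hi ⟨le_rfl, hlen⟩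
          simp only [← hτ] at this
          rwa [dif_pos htag] at this
        have h2 : P.t (i+1) ∈ Set.Ioo (τ - d τ) (τ + d τ) := by
          have := hsub i hi ⟨hlen, le_rfl⟩
          simp only [← hτ] at this
          rwa [dif_pos htag] at this
        obtain ⟨hm1, hm2⟩ := P.tag_mem i hi
        have e1 : |h (P.t (i+1)) - h τ| ≤ c * |P.t (i+1) - τ| := by
          apply hbound τ htag
          rw [Real.dist_eq, abs_sub_lt_iff]
          constructor <;> [linarith [h2.2]; linarith [h2.1]]
        have e2 : |h (P.t i) - h τ| ≤ c * |P.t i - τ| := by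
          apply hbound τ htag
          rw [Real.dist_eq, abs_sub_lt_iff]
          constructor <;> [linarith [h1.2]; linarith [h1.1]]
        rw [abs_of_nonneg (by linarith : (0:ℝ) ≤ P.t (i+1) - τ)] at e1
        rw [abs_of_nonpos (by linarith : P.t i - τ ≤ 0)] at e2
        calc |h (P.t (i+1)) - h (P.t i)|
            ≤ |h (P.t (i+1)) - h τ| + |h (P.t i) - h τ| := by
              have := abs_sub_le (h (P.t (i+1))) (h τ) (h (P.t i))
              rw [abs_sub_comm (h τ) (h (P.t i))] at this
              exact this
          _ ≤ c * (P.t (i+1) - τ) + c * (τ - P.t i) := by linarith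
          _ = c * (P.t (i+1) - P.t i) := by ring
      · simp only [htag, if_false]
        exact mul_nonneg hc.le (by linarith)
    calc (∑ i ∈ Finset.range P.n, if P.tag i ∈ S then |h (P.t (i+1)) - h (P.t i)| else 0)
        ≤ ∑ i ∈ Finset.range P.n, c * (P.t (i+1) - P.t i) := Finset.sum_le_sum step
      _ = c * (b - a) := by rw [← Finset.mul_sum, P.sum_lengths]
      _ < ε := by
          have hc2 : c * (2*(b-a)+2) = ε := by
            rw [hc_def]; field_simp
          nlinarith

lemma negvar_of_null {a b : ℝ} {h : ℝ → ℝ} {S : Set ℝ}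
    (hS : volume S = 0) (hd : ∀ x ∈ S, DifferentiableAt ℝ h x) : NegVar a b h S := by
  intro ε hε
  set m : ℝ → ℕ := fun x => Nat.floor |deriv h x| + 1 with hm
  have hmx : ∀ x, |deriv h x| < (m x : ℝ) := fun x => by
    have := Nat.lt_floor_add_one |deriv h x|
    rw [hm]; push_cast; exact this
  -- choose small open neighborhoods of the strata
  have hU : ∀ k : ℕ, ∃ U : Set ℝ, {x ∈ S | m x = k} ⊆ U ∧ IsOpen U ∧
      volume U < ENNReal.ofReal (ε / ((k+1) * 2^(k+2))) := by
    intro k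
    have hlt : volume {x ∈ S | m x = k} < ENNReal.ofReal (ε / ((k+1) * 2^(k+2))) := by
      have h0 : volume {x ∈ S | m x = k} = 0 :=
        le_antisymm (le_trans (measure_mono (Set.sep_subset _ _)) hS.le) zero_le
      rw [h0]
      apply ENNReal.ofReal_pos.mpr
      positivity
    exact Set.exists_isOpen_lt_of_lt _ _ hlt
  choose U hUsub hUopen hUvol using hU
  have key : ∀ x ∈ S, ∃ d > 0, (∀ y, dist y x < d → |h y - h x| ≤ (m x : ℝ) * |y - x|) ∧
      Metric.ball x d ⊆ U (m x) := by
    intro x hx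
    obtain ⟨d₁, hd₁, hb⟩ := slope_bound (hd x hx).hasDerivAt (hmx x)
    obtain ⟨d₂, hd₂, hball⟩ := Metric.isOpen_iff.mp (hUopen (m x)) x (hUsub (m x) ⟨hx, rfl⟩)
    exact ⟨min d₁ d₂, lt_min hd₁ hd₂,
      fun y hy => hb y (lt_of_lt_of_le hy (min_le_left _ _)),
      (Metric.ball_subset_ball (min_le_right _ _)).trans hball⟩
  choose! d hd0 hbound hball using key
  refine ⟨fun x => if hx : x ∈ S then d x else 1, fun x _ => ?_, fun P hsub => ?_⟩
  · by_cases hx : x ∈ S <;> simp [hx]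
    exact hd0 x hx
  · set T := (Finset.range P.n).filter (fun i => P.tag i ∈ S) with hT
    have e0 : (∑ i ∈ Finset.range P.n, if P.tag i ∈ S then |h (P.t (i+1)) - h (P.t i)| else 0)
        = ∑ i ∈ T, |h (P.t (i+1)) - h (P.t i)| := by
      rw [hT, Finset.sum_filter]
    rw [e0]
    set K := T.sup (fun i => m (P.tag i)) with hK
    have maps : ∀ i ∈ T, m (P.tag i) ∈ Finset.range (K+1) := by
      intro i hi
      rw [Finset.mem_range, Nat.lt_succ_iff]
      exact Finset.le_sup (f := fun i => m (P.tag i)) hi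
    rw [← Finset.sum_fiberwise_of_maps_to maps]
    -- bound each fiber
    have fiber_bound : ∀ k ∈ Finset.range (K+1),
        (∑ i ∈ T.filter (fun i => m (P.tag i) = k), |h (P.t (i+1)) - h (P.t i)|)
          ≤ ε / 2^(k+2) := by
      intro k _
      set Tk := T.filter (fun i => m (P.tag i) = k) with hTk
      -- interval facts
      have hTk_mem : ∀ i ∈ Tk, i < P.n ∧ P.tag i ∈ S ∧ m (P.tag i) = k := by
        intro i hi
        rw [hTk, Finset.mem_filter, hT, Finset.mem_filter, Finset.mem_range] at hi
        exact ⟨hi.1.1, hi.1.2, hi.2⟩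
      have hIoc_sub : ∀ i ∈ Tk, Set.Ioc (P.t i) (P.t (i+1)) ⊆ U k := by
        intro i hi y hy
        obtain ⟨hin, htag, hmk⟩ := hTk_mem i hi
        have hicc : Set.Icc (P.t i) (P.t (i+1)) ⊆
            Set.Ioo (P.tag i - d (P.tag i)) (P.tag i + d (P.tag i)) := by
          have := hsub i hin
          simpa only [dif_pos htag] using this
        have : y ∈ Set.Ioo (P.tag i - d (P.tag i)) (P.tag i + d (P.tag i)) :=
          hicc (Set.Ioc_subset_Icc_self hy)
        have : y ∈ Metric.ball (P.tag i) (d (P.tag i)) := by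
          rw [Real.ball_eq_Ioo]; exact this
        have := hball (P.tag i) htag this
        rwa [hmk] at this
      -- per-term bound
      have term_bound : ∀ i ∈ Tk, |h (P.t (i+1)) - h (P.t i)| ≤ (k:ℝ) * (P.t (i+1) - P.t i) := by
        intro i hi
        obtain ⟨hin, htag, hmk⟩ := hTk_mem i hi
        have hlen : P.t i ≤ P.t (i+1) := P.t_mono i hin
        have hicc : Set.Icc (P.t i) (P.t (i+1)) ⊆
            Set.Ioo (P.tag i - d (P.tag i)) (P.tag i + d (P.tag i)) := by
          have := hsub i hin
          simpa only [dif_pos htag] using this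
        have h1 := hicc ⟨le_rfl, hlen⟩
        have h2 := hicc ⟨hlen, le_rfl⟩
        obtain ⟨hm1, hm2⟩ := P.tag_mem i hin
        have e1 : |h (P.t (i+1)) - h (P.tag i)| ≤ (m (P.tag i) : ℝ) * |P.t (i+1) - P.tag i| := by
          apply hbound (P.tag i) htag
          rw [Real.dist_eq, abs_sub_lt_iff]
          constructor <;> [linarith [h2.2]; linarith [h2.1]]
        have e2 : |h (P.t i) - h (P.tag i)| ≤ (m (P.tag i) : ℝ) * |P.t i - P.tag i| := by
          apply hbound (P.tag i) htag
          rw [Real.dist_eq, abs_sub_lt_iff]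
          constructor <;> [linarith [h1.2]; linarith [h1.1]]
        rw [abs_of_nonneg (by linarith : (0:ℝ) ≤ P.t (i+1) - P.tag i), hmk] at e1
        rw [abs_of_nonpos (by linarith : P.t i - P.tag i ≤ 0), hmk] at e2
        calc |h (P.t (i+1)) - h (P.t i)|
            ≤ |h (P.t (i+1)) - h (P.tag i)| + |h (P.t i) - h (P.tag i)| := by
              have := abs_sub_le (h (P.t (i+1))) (h (P.tag i)) (h (P.t i))
              rw [abs_sub_comm (h (P.tag i)) (h (P.t i))] at this
              exact this
          _ ≤ (k:ℝ) * (P.t (i+1) - P.tag i) + (k:ℝ) * (P.tag i - P.t i) := by linarith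
          _ = (k:ℝ) * (P.t (i+1) - P.t i) := by ring
      -- sum of lengths bound
      have len_bound : ∑ i ∈ Tk, (P.t (i+1) - P.t i) ≤ (volume (U k)).toReal := by
        have disj : (Tk : Set ℕ).PairwiseDisjoint
            (fun i => Set.Ioc (P.t i) (P.t (i+1))) := by
          intro i hi j hj hij
          rcases lt_or_gt_of_ne hij with hlt | hlt
          · have hij' : i + 1 ≤ j := hlt
            have hjn : j < P.n := (hTk_mem j hj).1
            have := P.t_le_t hij' hjn.le
            simp only [Function.onFun]
            rw [Set.Ioc_disjoint_Ioc]
            exact le_trans (min_le_left _ _) (le_trans this (le_max_right _ _))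
          · have hij' : j + 1 ≤ i := hlt
            have hin : i < P.n := (hTk_mem i hi).1
            have := P.t_le_t hij' hin.le
            simp only [Function.onFun]
            rw [Set.Ioc_disjoint_Ioc]
            exact le_trans (min_le_right _ _) (le_trans this (le_max_left _ _))
        have evol : ∀ i ∈ Tk, volume (Set.Ioc (P.t i) (P.t (i+1)))
            = ENNReal.ofReal (P.t (i+1) - P.t i) := fun i _ => Real.volume_Ioc
        have eunion : ∑ i ∈ Tk, volume (Set.Ioc (P.t i) (P.t (i+1)))
            = volume (⋃ i ∈ Tk, Set.Ioc (P.t i) (P.t (i+1))) :=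
          (measure_biUnion_finset disj (fun i _ => measurableSet_Ioc)).symm
        have hle : volume (⋃ i ∈ Tk, Set.Ioc (P.t i) (P.t (i+1))) ≤ volume (U k) :=
          measure_mono (Set.iUnion₂_subset hIoc_sub)
        have hfin : volume (U k) ≠ ⊤ := ne_top_of_lt (hUvol k)
        calc ∑ i ∈ Tk, (P.t (i+1) - P.t i)
            = (∑ i ∈ Tk, volume (Set.Ioc (P.t i) (P.t (i+1)))).toReal := by
              rw [ENNReal.toReal_sum (fun i hi => by rw [evol i hi]; exact ENNReal.ofReal_ne_top)]
              apply Finset.sum_congr rfl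
              intro i hi
              rw [evol i hi, ENNReal.toReal_ofReal]
              have : i < P.n := (hTk_mem i hi).1
              linarith [P.t_mono i this]
          _ ≤ (volume (U k)).toReal := by
              apply ENNReal.toReal_mono hfin
              rw [eunion] at *
              exact hle
      have lenpos : ∀ i ∈ Tk, (0:ℝ) ≤ P.t (i+1) - P.t i := by
        intro i hi
        linarith [P.t_mono i (hTk_mem i hi).1]
      have volk : (volume (U k)).toReal ≤ ε / ((k+1) * 2^(k+2)) := by
        have := (hUvol k).le
        have h2 : (volume (U k)).toReal ≤ (ENNReal.ofReal (ε / ((k+1) * 2^(k+2)))).toReal :=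
          ENNReal.toReal_mono ENNReal.ofReal_ne_top this
        rwa [ENNReal.toReal_ofReal (by positivity)] at h2
      calc (∑ i ∈ Tk, |h (P.t (i+1)) - h (P.t i)|)
          ≤ ∑ i ∈ Tk, (k:ℝ) * (P.t (i+1) - P.t i) := Finset.sum_le_sum term_bound
        _ = (k:ℝ) * ∑ i ∈ Tk, (P.t (i+1) - P.t i) := by rw [Finset.mul_sum]
        _ ≤ (k:ℝ) * (volume (U k)).toReal := by
            apply mul_le_mul_of_nonneg_left len_bound (Nat.cast_nonneg k)
        _ ≤ (k:ℝ) * (ε / ((k+1) * 2^(k+2))) :=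
            mul_le_mul_of_nonneg_left volk (Nat.cast_nonneg k)
        _ ≤ ((k:ℝ)+1) * (ε / ((k+1) * 2^(k+2))) :=
            mul_le_mul_of_nonneg_right (by linarith [Nat.cast_nonneg (α := ℝ) k]) (by positivity)
        _ = ε / 2^(k+2) := by
            have h1 : ((k:ℝ)+1) ≠ 0 := by positivity
            field_simp
    calc (∑ k ∈ Finset.range (K+1), ∑ i ∈ T.filter (fun i => m (P.tag i) = k),
            |h (P.t (i+1)) - h (P.t i)|)
        ≤ ∑ k ∈ Finset.range (K+1), ε / 2^(k+2) := Finset.sum_le_sum fiber_bound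
      _ = (ε/4) * ∑ k ∈ Finset.range (K+1), (1/2:ℝ)^k := by
          rw [Finset.mul_sum]
          apply Finset.sum_congr rfl
          intro k _
          have h12 : (1/2:ℝ)^k = 1/2^k := by rw [div_pow, one_pow]
          rw [h12, pow_add]
          ring
      _ ≤ (ε/4) * 2 := by
          apply mul_le_mul_of_nonneg_left _ (by positivity)
          have hg : ∑ k ∈ Finset.range (K+1), (1/2:ℝ)^k = 2 - 2*(1/2)^(K+1) := by
            rw [geom_sum_eq (by norm_num : (1/2:ℝ) ≠ 1)]
            rw [div_eq_iff (by norm_num : (1/2:ℝ) - 1 ≠ 0)]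
            ring
          rw [hg]
          have : (0:ℝ) ≤ (1/2)^(K+1) := by positivity
          linarith
      _ < ε := by linarith

lemma slope_lower_bound {g : ℝ → ℝ} {x L : ℝ} (hL : L ≠ 0) (hd : HasDerivAt g L x) :
    ∃ d > 0, ∀ y, dist y x < d → |g y - g x| ≥ (|L|/2) * |y - x| := by
  have hL2 : 0 < |L|/2 := by positivity
  have ht := hasDerivAt_iff_tendsto_slope.mp hd
  have h2 : ∀ᶠ y in 𝓝[≠] x, |slope g x y| ≥ |L|/2 := by
    have := ht (Metric.ball_mem_nhds L hL2)
    filter_upwards [this] with y hy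
    have h3 : |slope g x y - L| < |L|/2 := by simpa [Real.dist_eq] using hy
    have := abs_sub_abs_le_abs_sub L (slope g x y)
    rw [abs_sub_comm L (slope g x y)] at this
    linarith
  obtain ⟨d, hd0, hdy⟩ := Metric.mem_nhdsWithin_iff.mp h2
  refine ⟨d, hd0, fun y hy => ?_⟩
  rcases eq_or_ne y x with rfl | hne
  · simp
  · have h4 : |slope g x y| ≥ |L|/2 := hdy ⟨by rwa [Metric.mem_ball], hne⟩
    rw [slope_def_field] at h4
    have hyx : (0:ℝ) < |y - x| := abs_pos.mpr (sub_ne_zero.mpr hne)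
    rw [abs_div] at h4
    rw [ge_iff_le, le_div_iff₀ hyx] at h4
    linarith

lemma null_of_image_null {g : ℝ → ℝ} {A : Set ℝ}
    (hA : ∀ x ∈ A, ∃ L : ℝ, L ≠ 0 ∧ HasDerivAt g L x)
    (him : volume (g '' A) = 0) : volume A = 0 := by
  -- the pieces
  set E : ℕ → ℤ → Set ℝ := fun q k =>
    {x ∈ A | (∀ y, dist y x < 1/(q+1) → |g y - g x| ≥ |y-x|/(q+1)) ∧
      x ∈ Set.Ico ((k:ℝ)/(2*(q+1))) (((k:ℝ)+1)/(2*(q+1)))} with hE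
  -- covering
  have hcov : A ⊆ ⋃ (q : ℕ) (k : ℤ), E q k := by
    intro x hx
    obtain ⟨L, hL, hdL⟩ := hA x hx
    obtain ⟨d, hd0, hlow⟩ := slope_lower_bound hL hdL
    obtain ⟨q, hq⟩ := exists_nat_one_div_lt (lt_min hd0 (by positivity : (0:ℝ) < |L|/2))
    have hq1 : (0:ℝ) < (q:ℝ)+1 := by positivity
    have hqd : 1/((q:ℝ)+1) < d := lt_of_lt_of_le hq (min_le_left _ _)
    have hqc : 1/((q:ℝ)+1) ≤ |L|/2 := le_of_lt (lt_of_lt_of_le hq (min_le_right _ _))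
    refine Set.mem_iUnion.mpr ⟨q, Set.mem_iUnion.mpr ⟨⌊x * (2*((q:ℝ)+1))⌋, ⟨hx, ?_, ?_⟩⟩⟩
    · intro y hy
      have h1 : |g y - g x| ≥ (|L|/2) * |y - x| := hlow y (lt_trans hy hqd)
      have h2 : (|L|/2) * |y-x| ≥ (1/((q:ℝ)+1)) * |y-x| :=
        mul_le_mul_of_nonneg_right hqc (abs_nonneg _)
      calc |y-x|/((q:ℝ)+1) = (1/((q:ℝ)+1)) * |y-x| := by ring
        _ ≤ (|L|/2) * |y-x| := h2
        _ ≤ |g y - g x| := h1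
    · have h1 := Int.floor_le (x * (2*((q:ℝ)+1)))
      have h2 := Int.lt_floor_add_one (x * (2*((q:ℝ)+1)))
      constructor
      · rw [div_le_iff₀ (by positivity)]; linarith
      · rw [lt_div_iff₀ (by positivity)]; push_cast; linarith
  -- each piece is null
  have hnull : ∀ (q : ℕ) (k : ℤ), volume (E q k) = 0 := by
    intro q k
    set s := E q k with hs
    have hsA : s ⊆ A := fun x hx => hx.1
    have hexp : ∀ x ∈ s, ∀ y ∈ s, |x - y| ≤ ((q:ℝ)+1) * |g x - g y| := by
      intro x hx y hy
      have hq1 : (0:ℝ) < (q:ℝ)+1 := by positivity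
      have hxI := hx.2.2
      have hyI := hy.2.2
      have hdist : dist x y < 1/((q:ℝ)+1) := by
        rw [Real.dist_eq]
        rw [Set.mem_Ico] at hxI hyI
        rw [abs_sub_lt_iff]
        have e1 : ((k:ℝ)+1)/(2*((q:ℝ)+1)) - (k:ℝ)/(2*((q:ℝ)+1)) = 1/(2*((q:ℝ)+1)) := by
          field_simp
          ring
        have h2q : 1/(2*((q:ℝ)+1)) < 1/((q:ℝ)+1) := by
          rw [div_lt_div_iff₀ (by positivity) (by positivity)]; nlinarith
        constructor <;> nlinarith [hxI.1, hxI.2, hyI.1, hyI.2]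
      have := hy.2.1 x (by simpa [dist_comm] using hdist)
      rw [ge_iff_le, div_le_iff₀ (by positivity)] at this
      calc |x - y| ≤ |g x - g y| * ((q:ℝ)+1) := this
        _ = ((q:ℝ)+1) * |g x - g y| := mul_comm _ _
    -- inverse function
    set φ : ℝ → ℝ := fun z => if hz : ∃ x ∈ s, g x = z then hz.choose else 0 with hφ
    have hφ_mem : ∀ z, (∃ x ∈ s, g x = z) → φ z ∈ s ∧ g (φ z) = z := by
      intro z hz
      rw [hφ]; simp only [dif_pos hz]
      exact ⟨hz.choose_spec.1, hz.choose_spec.2⟩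
    have hlip : LipschitzOnWith (⟨(q:ℝ)+1, by positivity⟩ : ℝ≥0) φ (g '' s) := by
      apply LipschitzOnWith.of_dist_le_mul
      intro z1 hz1 z2 hz2
      obtain ⟨x1, hx1, hgx1⟩ := hz1
      obtain ⟨x2, hx2, hgx2⟩ := hz2
      obtain ⟨hm1, he1⟩ := hφ_mem z1 ⟨x1, hx1, hgx1⟩
      obtain ⟨hm2, he2⟩ := hφ_mem z2 ⟨x2, hx2, hgx2⟩
      have := hexp (φ z1) hm1 (φ z2) hm2
      rw [he1, he2] at this
      rw [Real.dist_eq, Real.dist_eq]; exact this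
    have hsub : s ⊆ φ '' (g '' s) := by
      intro x hx
      obtain ⟨hm, he⟩ := hφ_mem (g x) ⟨x, hx, rfl⟩
      have : |x - φ (g x)| ≤ ((q:ℝ)+1) * |g x - g (φ (g x))| := hexp x hx _ hm
      rw [he] at this
      simp only [sub_self, abs_zero, mul_zero] at this
      have hxeq : x = φ (g x) := by
        have := abs_nonneg (x - φ (g x))
        have h0 : |x - φ (g x)| = 0 := le_antisymm ‹|x - φ (g x)| ≤ _› this
        have := abs_eq_zero.mp h0
        linarith [sub_eq_zero.mp this]
      exact ⟨g x, Set.mem_image_of_mem g hx, hxeq.symm⟩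
    -- measure estimate via Hausdorff measure
    have himg : volume (g '' s) = 0 :=
      le_antisymm (le_trans (measure_mono (Set.image_mono (f := g) hsA)) him.le) zero_le
    have key := hlip.hausdorffMeasure_image_le (d := 1) zero_le_one
    rw [hausdorffMeasure_real] at key
    rw [himg, mul_zero] at key
    exact le_antisymm (le_trans (measure_mono hsub) key) zero_le
  refine le_antisymm ?_ zero_le
  calc volume A ≤ volume (⋃ (q : ℕ) (k : ℤ), E q k) := measure_mono hcov
    _ = 0 := measure_iUnion_null fun q => measure_iUnion_null fun k => hnull q k
    _ ≤ 0 := le_rfl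


/-- `F ∘ g` has negligible variation on the set `B` where
`(F ∘ g)' = (f ∘ g) · g'` fails iff it has negligible variation on every null subset of
`[a,b]` and on the set where `g' = 0`. -/
theorem stmt11 (a b : ℝ) (hab : a ≤ b) (D : Set ℝ) (g F f : ℝ → ℝ)
    (hD : Set.MapsTo g (Set.Icc a b) D)
    (hg : ∀ᵐ x ∂(MeasureTheory.volume.restrict (Set.Icc a b)), DifferentiableAt ℝ g x)
    (hF : ∀ᵐ x ∂(MeasureTheory.volume.restrict D), DifferentiableAt ℝ F x)
    (hf : ∀ᵐ x ∂(MeasureTheory.volume.restrict D), deriv F x = f x) :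
    NegVar a b (F ∘ g) {x ∈ Set.Icc a b |
        ¬ ∃ L : ℝ, HasDerivAt g L x ∧ HasDerivAt (F ∘ g) (f (g x) * L) x}
      ↔ (∀ Z : Set ℝ, Z ⊆ Set.Icc a b → MeasureTheory.volume Z = 0 → NegVar a b (F ∘ g) Z) ∧
        NegVar a b (F ∘ g) {x ∈ Set.Icc a b | HasDerivAt g 0 x} := by
  set B : Set ℝ := {x ∈ Set.Icc a b |
      ¬ ∃ L : ℝ, HasDerivAt g L x ∧ HasDerivAt (F ∘ g) (f (g x) * L) x} with hB_def
  constructor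
  · intro hB
    constructor
    · -- null sets
      intro Z hZsub hZ0
      have hsplit : Z ⊆ (Z ∩ B) ∪ (Z \ B) := by
        intro x hx
        by_cases hxB : x ∈ B
        · exact Or.inl ⟨hx, hxB⟩
        · exact Or.inr ⟨hx, hxB⟩
      apply negvar_mono hsplit
      apply negvar_union (negvar_mono Set.inter_subset_right hB)
      apply negvar_of_null (le_antisymm (le_trans (measure_mono Set.diff_subset) hZ0.le) zero_le)
      intro x hx
      have hxI : x ∈ Set.Icc a b := hZsub hx.1
      have hp : ∃ L : ℝ, HasDerivAt g L x ∧ HasDerivAt (F ∘ g) (f (g x) * L) x := by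
        by_contra hc
        exact hx.2 ⟨hxI, hc⟩
      obtain ⟨L, _, hFL⟩ := hp
      exact hFL.differentiableAt
    · -- g' = 0 set
      have hsplit : {x ∈ Set.Icc a b | HasDerivAt g 0 x} ⊆
          B ∪ {x | HasDerivAt (F ∘ g) 0 x} := by
        intro x hx
        by_cases hxB : x ∈ B
        · exact Or.inl hxB
        · have hp : ∃ L : ℝ, HasDerivAt g L x ∧ HasDerivAt (F ∘ g) (f (g x) * L) x := by
            by_contra hc
            exact hxB ⟨hx.1, hc⟩
          obtain ⟨L, hgL, hFL⟩ := hp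
          have hL0 : L = 0 := hgL.unique hx.2
          rw [hL0, mul_zero] at hFL
          exact Or.inr hFL
      exact negvar_mono hsplit (negvar_union hB
        (negvar_of_hasDerivAt_zero hab (fun x hx => hx)))
  · rintro ⟨h1, h2⟩
    -- the three pieces
    set N : Set ℝ := {x ∈ Set.Icc a b | ¬ DifferentiableAt ℝ g x} with hN_def
    set Ybad : Set ℝ := {y | ¬ (DifferentiableAt ℝ F y ∧ deriv F y = f y)} with hY_def
    set A : Set ℝ := {x ∈ Set.Icc a b | (∃ L : ℝ, L ≠ 0 ∧ HasDerivAt g L x) ∧ g x ∈ Ybad}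
      with hA_def
    -- N is null
    have hNnull : volume N = 0 := by
      have h0 : (volume.restrict (Set.Icc a b)) {x | ¬ DifferentiableAt ℝ g x} = 0 :=
        ae_iff.mp hg
      rw [Measure.restrict_apply' measurableSet_Icc] at h0
      refine le_antisymm (le_trans (measure_mono ?_) h0.le) zero_le
      intro x hx
      exact ⟨hx.2, hx.1⟩
    -- Ybad ∩ D is null
    have hYnull : volume (Ybad ∩ D) = 0 := by
      have h0 : (volume.restrict D) Ybad = 0 := by
        have := (hF.and hf)
        exact ae_iff.mp this
      exact le_antisymm (le_trans (Measure.le_restrict_apply D Ybad) h0.le) zero_le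
    -- A is null
    have hAnull : volume A = 0 := by
      apply null_of_image_null (fun x hx => hx.2.1)
      refine le_antisymm (le_trans (measure_mono ?_) hYnull.le) zero_le
      rintro y ⟨x, hx, rfl⟩
      exact ⟨hx.2.2, hD hx.1⟩
    -- B is covered
    have hcov : B ⊆ (N ∪ {x ∈ Set.Icc a b | HasDerivAt g 0 x}) ∪ A := by
      intro x hx
      obtain ⟨hxI, hxn⟩ := hx
      by_cases hdiff : DifferentiableAt ℝ g x
      · set L := deriv g x with hL_def
        have hgL : HasDerivAt g L x := hdiff.hasDerivAt
        by_cases hL0 : L = 0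
        · rw [hL0] at hgL
          exact Or.inl (Or.inr ⟨hxI, hgL⟩)
        · refine Or.inr ⟨hxI, ⟨L, hL0, hgL⟩, ?_⟩
          rw [hY_def]
          intro ⟨hFd, hFd'⟩
          apply hxn
          refine ⟨L, hgL, ?_⟩
          have := (hFd.hasDerivAt).comp x hgL
          rwa [hFd'] at this
      · exact Or.inl (Or.inl ⟨hxI, hdiff⟩)
    apply negvar_mono hcov
    apply negvar_union (negvar_union (h1 N (fun x hx => hx.1) hNnull) h2)
    exact h1 A (fun x hx => hx.1) hAnull
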